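/- In the Set Cover fitness graph, let X₁ ⊆ V be any configuration for which there exists a node v ∈ V₂∖X₁ such that v ∉ A for every A ∈ X₁∩V₁ (i.e., a resident element of the universe not covered by any mutant set-node). Then the probability that the Heterogeneous Moran process started at X₁ ever reaches a configuration X₂ with X₂∩V₁ = ∅ is at least ((1/n)/((1/n)+(n−1)·y))^{|V₁|}. -/

import Mathlib

open Finset
open scoped Classical

/-- A fitness graph: a finite strongly connected weighted directed graph together with
mutant and resident fitness functions. `w u v > 0` encodes that `(u,v)` is an edge
of non-zero weight; `w u ·` is a probability distribution. -/
structure FitnessGraph (V : Type) [Fintype V] [DecidableEq V] where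
  w : V → V → ℝ
  m : V → ℝ
  r : V → ℝ
  w_nonneg : ∀ u v, 0 ≤ w u v
  w_rowsum : ∀ u, ∑ v, w u v = 1
  strongly_connected : ∀ u v : V, Relation.ReflTransGen (fun a b => 0 < w a b) u v
  m_pos : ∀ u, 0 < m u
  r_pos : ∀ u, 0 < r u

variable {V : Type} [Fintype V] [DecidableEq V]

/-- A fitness graph is mutant-biased if `m(u) ≥ r(u)` for every node `u`. -/
def FitnessGraph.MutantBiased (G : FitnessGraph V) : Prop :=
  ∀ u, G.r u ≤ G.m u

/-- The (out-)degree of a node: the number of neighbors along edges of non-zero weight. -/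
noncomputable def FitnessGraph.deg (G : FitnessGraph V) (u : V) : ℕ :=
  (Finset.univ.filter fun v => 0 < G.w u v).card

/-- A fitness graph is undirected if its edge relation is symmetric and the weights
are uniform: `w(u,v) = 1/d(u)` for every edge `(u,v)`. -/
def FitnessGraph.Undirected (G : FitnessGraph V) : Prop :=
  (∀ u v, 0 < G.w u v → 0 < G.w v u) ∧
  ∀ u v, 0 < G.w u v → G.w u v = 1 / (G.deg u : ℝ)

/-- The fitness of node `u` in configuration `X`: `m(u)` if `u` is a mutant, `r(u)` otherwise. -/
def FitnessGraph.fit (G : FitnessGraph V) (X : Finset V) (u : V) : ℝ :=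
  if u ∈ X then G.m u else G.r u

/-- Total population fitness in configuration `X`. -/
def FitnessGraph.totalFit (G : FitnessGraph V) (X : Finset V) : ℝ :=
  ∑ u, G.fit X u

/-- The configuration resulting from `X` when `u` reproduces and replaces `v`. -/
def moranNext (X : Finset V) (u v : V) : Finset V :=
  if u ∈ X then insert v X else X.erase v

/-- One-step transition probability of the Heterogeneous Moran process. -/
noncomputable def FitnessGraph.step (G : FitnessGraph V) (X Y : Finset V) : ℝ :=
  ∑ u, ∑ v, (G.fit X u / G.totalFit X) * G.w u v * (if moranNext X u v = Y then 1 else 0)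

/-- `t`-step transition probability of the Heterogeneous Moran process. -/
noncomputable def FitnessGraph.stepN (G : FitnessGraph V) : ℕ → Finset V → Finset V → ℝ
  | 0, X, Y => if X = Y then 1 else 0
  | t + 1, X, Y => ∑ Z, FitnessGraph.stepN G t X Z * G.step Z Y

/-- Fixation probability: the probability that, started from seed set `S`, the process
eventually reaches the all-mutant configuration `V`; since `V` is absorbing this equals
`⨆ t, P(X_t = V)`. -/
noncomputable def FitnessGraph.fp (G : FitnessGraph V) (S : Finset V) : ℝ :=
  ⨆ t : ℕ, G.stepN t S Finset.univ

/-- One-step transition probability of the Moran process stopped upon reaching the set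
of configurations `A` (configurations in `A` are made absorbing). -/
noncomputable def stopStep (G : FitnessGraph V) (A : Set (Finset V)) (X Y : Finset V) : ℝ :=
  if X ∈ A then (if Y = X then 1 else 0) else G.step X Y

/-- `t`-step transition probability of the stopped process. -/
noncomputable def stopStepN (G : FitnessGraph V) (A : Set (Finset V)) :
    ℕ → Finset V → Finset V → ℝ
  | 0, X, Y => if X = Y then 1 else 0
  | t + 1, X, Y => ∑ Z, stopStepN G A t X Z * stopStep G A Z Y

/-- The probability that the Heterogeneous Moran process started at `X0` ever reaches a
configuration in `A`: the supremum over `t` of the probability that the process stopped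
at `A` is in `A` at time `t`. -/
noncomputable def reachProb (G : FitnessGraph V) (A : Set (Finset V)) (X0 : Finset V) : ℝ :=
  ⨆ t : ℕ, ∑ Y ∈ Finset.univ.filter (fun Y => Y ∈ A), stopStepN G A t X0 Y

/-- The Set Cover fitness graph for an instance `(U, 𝒮)` with parameters `x ≥ 1` and
`0 < y ≤ 1`: the vertex set is `V₁ ⊔ V₂` with `V₁ = 𝒮`, `V₂ = U`; there is an edge from
`A ∈ V₁` to each `e ∈ A` and all edges from `V₂` to `V₁`, with uniform weights;
residents have fitness `1` everywhere, mutants have fitness `x` on `V₁` and `y` on `V₂`. -/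
def IsSetCoverGraph {U : Type} [Fintype U] [DecidableEq U] (𝒮 : Finset (Finset U))
    (x y : ℝ) (G : FitnessGraph ({A // A ∈ 𝒮} ⊕ U)) : Prop :=
  (∀ (A : {A // A ∈ 𝒮}) (e : U),
      G.w (Sum.inl A) (Sum.inr e) = if e ∈ A.1 then 1 / (A.1.card : ℝ) else 0) ∧
  (∀ A B : {A // A ∈ 𝒮}, G.w (Sum.inl A) (Sum.inl B) = 0) ∧
  (∀ (e : U) (A : {A // A ∈ 𝒮}), G.w (Sum.inr e) (Sum.inl A) = 1 / (𝒮.card : ℝ)) ∧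
  (∀ e e' : U, G.w (Sum.inr e) (Sum.inr e') = 0) ∧
  (∀ A : {A // A ∈ 𝒮}, G.m (Sum.inl A) = x) ∧
  (∀ e : U, G.m (Sum.inr e) = y) ∧
  (∀ u : {A // A ∈ 𝒮} ⊕ U, G.r u = 1)

section Generic
variable {V : Type} [Fintype V] [DecidableEq V]

lemma fit_pos (G : FitnessGraph V) (X : Finset V) (u : V) : 0 < G.fit X u := by
  unfold FitnessGraph.fit
  split
  · exact G.m_pos u
  · exact G.r_pos u

lemma totalFit_pos [Nonempty V] (G : FitnessGraph V) (X : Finset V) : 0 < G.totalFit X :=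
  Finset.sum_pos (fun u _ => fit_pos G X u) Finset.univ_nonempty

lemma totalFit_nonneg (G : FitnessGraph V) (X : Finset V) : 0 ≤ G.totalFit X :=
  Finset.sum_nonneg fun u _ => le_of_lt (fit_pos G X u)

lemma coef_nonneg (G : FitnessGraph V) (X : Finset V) (u w : V) :
    0 ≤ G.fit X u / G.totalFit X * G.w u w :=
  mul_nonneg (div_nonneg (le_of_lt (fit_pos G X u)) (totalFit_nonneg G X)) (G.w_nonneg u w)

lemma step_apply (G : FitnessGraph V) (X : Finset V) (h : Finset V → ℝ) :
    ∑ Y, G.step X Y * h Y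
      = ∑ u, ∑ w, (G.fit X u / G.totalFit X) * G.w u w * h (moranNext X u w) := by
  simp only [FitnessGraph.step, Finset.sum_mul]
  rw [Finset.sum_comm]
  refine Finset.sum_congr rfl fun u _ => ?_
  rw [Finset.sum_comm]
  refine Finset.sum_congr rfl fun w _ => ?_
  simp [mul_ite, ite_mul, Finset.sum_ite_eq]

lemma step_nonneg (G : FitnessGraph V) (X Y : Finset V) : 0 ≤ G.step X Y := by
  refine Finset.sum_nonneg fun u _ => Finset.sum_nonneg fun w _ => ?_
  refine mul_nonneg (coef_nonneg G X u w) ?_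
  split <;> norm_num

lemma step_rowsum [Nonempty V] (G : FitnessGraph V) (X : Finset V) : ∑ Y, G.step X Y = 1 := by
  have h := step_apply G X (fun _ => 1)
  simp only [mul_one] at h
  rw [h]
  have h2 : ∀ u : V, ∑ w : V, G.fit X u / G.totalFit X * G.w u w
      = G.fit X u / G.totalFit X := by
    intro u; rw [← Finset.mul_sum, G.w_rowsum, mul_one]
  rw [Finset.sum_congr rfl fun u _ => h2 u, ← Finset.sum_div]
  exact div_self (ne_of_gt (totalFit_pos G X))

lemma stopStep_nonneg (G : FitnessGraph V) (A : Set (Finset V)) (X Y : Finset V) :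
    0 ≤ stopStep G A X Y := by
  unfold stopStep
  split
  · split <;> norm_num
  · exact step_nonneg G X Y

lemma stopStep_rowsum [Nonempty V] (G : FitnessGraph V) (A : Set (Finset V)) (X : Finset V) :
    ∑ Y, stopStep G A X Y = 1 := by
  unfold stopStep
  split
  · simp
  · exact step_rowsum G X

lemma stopStepN_nonneg (G : FitnessGraph V) (A : Set (Finset V)) (t : ℕ) (X Y : Finset V) :
    0 ≤ stopStepN G A t X Y := by
  induction t generalizing X Y with
  | zero => unfold stopStepN; split <;> norm_num
  | succ t ih =>
      unfold stopStepN
      exact Finset.sum_nonneg fun Z _ => mul_nonneg (ih X Z) (stopStep_nonneg G A Z Y)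

lemma stopStepN_rowsum [Nonempty V] (G : FitnessGraph V) (A : Set (Finset V)) (t : ℕ)
    (X : Finset V) : ∑ Y, stopStepN G A t X Y = 1 := by
  induction t generalizing X with
  | zero => simp [stopStepN]
  | succ t ih =>
      unfold stopStepN
      rw [Finset.sum_comm]
      calc ∑ Z, ∑ Y, stopStepN G A t X Z * stopStep G A Z Y
          = ∑ Z, stopStepN G A t X Z * ∑ Y, stopStep G A Z Y := by
            refine Finset.sum_congr rfl fun Z _ => ?_; rw [Finset.mul_sum]
        _ = ∑ Z, stopStepN G A t X Z := by
            refine Finset.sum_congr rfl fun Z _ => ?_; rw [stopStep_rowsum, mul_one]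
        _ = 1 := ih X

lemma stopStepN_absorbed (G : FitnessGraph V) (A : Set (Finset V)) {X : Finset V}
    (hX : X ∈ A) (t : ℕ) (Y : Finset V) :
    stopStepN G A t X Y = if X = Y then 1 else 0 := by
  induction t generalizing Y with
  | zero => rfl
  | succ t ih =>
      unfold stopStepN
      rw [Finset.sum_congr rfl fun Z (_ : Z ∈ Finset.univ) => by rw [ih Z]]
      simp only [ite_mul, one_mul, zero_mul, Finset.sum_ite_eq, Finset.mem_univ, if_true]
      unfold stopStep
      rw [if_pos hX]
      by_cases h : X = Y
      · simp [h]
      · simp [h, Ne.symm h]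

lemma stopStepN_succ_left (G : FitnessGraph V) (A : Set (Finset V)) (t : ℕ) (X Y : Finset V) :
    stopStepN G A (t + 1) X Y = ∑ Z, stopStep G A X Z * stopStepN G A t Z Y := by
  induction t generalizing Y with
  | zero =>
      show ∑ Z, stopStepN G A 0 X Z * stopStep G A Z Y = _
      simp [stopStepN, ite_mul, Finset.sum_ite_eq']
  | succ t ih =>
      show ∑ Z, stopStepN G A (t+1) X Z * stopStep G A Z Y = _
      calc ∑ Z, stopStepN G A (t+1) X Z * stopStep G A Z Y
          = ∑ Z, (∑ W, stopStep G A X W * stopStepN G A t W Z) * stopStep G A Z Y := by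
            refine Finset.sum_congr rfl fun Z _ => by rw [ih]
        _ = ∑ W, stopStep G A X W * ∑ Z, stopStepN G A t W Z * stopStep G A Z Y := by
            simp only [Finset.sum_mul]
            rw [Finset.sum_comm]
            refine Finset.sum_congr rfl fun W _ => ?_
            rw [Finset.mul_sum]
            refine Finset.sum_congr rfl fun Z _ => by ring
        _ = _ := rfl

lemma stopStepN_add (G : FitnessGraph V) (A : Set (Finset V)) (a b : ℕ) (X Y : Finset V) :
    stopStepN G A (a + b) X Y = ∑ Z, stopStepN G A a X Z * stopStepN G A b Z Y := by
  induction b generalizing Y with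
  | zero => simp [stopStepN, mul_ite, Finset.sum_ite_eq]
  | succ b ih =>
      show stopStepN G A ((a+b)+1) X Y = _
      show ∑ Z, stopStepN G A (a+b) X Z * stopStep G A Z Y = _
      calc ∑ Z, stopStepN G A (a+b) X Z * stopStep G A Z Y
          = ∑ Z, (∑ W, stopStepN G A a X W * stopStepN G A b W Z) * stopStep G A Z Y := by
            refine Finset.sum_congr rfl fun Z _ => by rw [ih]
        _ = ∑ W, stopStepN G A a X W * ∑ Z, stopStepN G A b W Z * stopStep G A Z Y := by
            simp only [Finset.sum_mul]
            rw [Finset.sum_comm]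
            refine Finset.sum_congr rfl fun W _ => ?_
            rw [Finset.mul_sum]
            refine Finset.sum_congr rfl fun Z _ => by ring
        _ = _ := rfl

end Generic

section SetCover
set_option linter.unusedSectionVars false
variable {U : Type} [Fintype U] [DecidableEq U]

/-- The target set of configurations: no mutant set-nodes. -/
def scA (𝒮 : Finset (Finset U)) : Set (Finset ({A // A ∈ 𝒮} ⊕ U)) :=
  {X | ∀ B : {A // A ∈ 𝒮}, Sum.inl B ∉ X}

/-- Number of mutant set-nodes. -/
noncomputable def scK (𝒮 : Finset (Finset U)) (Z : Finset ({A // A ∈ 𝒮} ⊕ U)) : ℕ :=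
  (Finset.univ.filter fun B : {A // A ∈ 𝒮} => Sum.inl B ∈ Z).card

/-- The invariant region: `v` is resident and no mutant set-node contains `v`. -/
def scR (𝒮 : Finset (Finset U)) (v : U) (Z : Finset ({A // A ∈ 𝒮} ⊕ U)) : Prop :=
  Sum.inr v ∉ Z ∧ ∀ B : {A // A ∈ 𝒮}, Sum.inl B ∈ Z → v ∉ B.1

/-- The potential function. -/
noncomputable def scg (𝒮 : Finset (Finset U)) (v : U) (ρ : ℝ)
    (Z : Finset ({A // A ∈ 𝒮} ⊕ U)) : ℝ :=
  if scR 𝒮 v Z then ρ ^ scK 𝒮 Z else 0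

lemma scg_nonneg (𝒮 : Finset (Finset U)) (v : U) {ρ : ℝ} (hρ : 0 ≤ ρ)
    (Z : Finset ({A // A ∈ 𝒮} ⊕ U)) : 0 ≤ scg 𝒮 v ρ Z := by
  unfold scg; split
  · exact pow_nonneg hρ _
  · exact le_refl 0

lemma scg_le_one (𝒮 : Finset (Finset U)) (v : U) {ρ : ℝ} (hρ0 : 0 ≤ ρ) (hρ1 : ρ ≤ 1)
    (Z : Finset ({A // A ∈ 𝒮} ⊕ U)) : scg 𝒮 v ρ Z ≤ 1 := by
  unfold scg; split
  · exact pow_le_one₀ hρ0 hρ1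
  · norm_num

lemma scK_le (𝒮 : Finset (Finset U)) (Z : Finset ({A // A ∈ 𝒮} ⊕ U)) :
    scK 𝒮 Z ≤ 𝒮.card := by
  unfold scK
  calc _ ≤ (Finset.univ : Finset {A // A ∈ 𝒮}).card := Finset.card_filter_le _ _
    _ = 𝒮.card := by rw [Finset.card_univ, Fintype.card_coe]

lemma scK_pos (𝒮 : Finset (Finset U)) {Z : Finset ({A // A ∈ 𝒮} ⊕ U)} (hZ : Z ∉ scA 𝒮) :
    ∃ B : {A // A ∈ 𝒮}, Sum.inl B ∈ Z := by
  simpa [scA, not_forall, not_not] using hZ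

lemma scK_insert_inr (𝒮 : Finset (Finset U)) (Z : Finset ({A // A ∈ 𝒮} ⊕ U)) (e : U) :
    scK 𝒮 (insert (Sum.inr e) Z) = scK 𝒮 Z := by
  unfold scK
  congr 1
  apply Finset.filter_congr
  intro B _
  simp

lemma scK_erase_inr (𝒮 : Finset (Finset U)) (Z : Finset ({A // A ∈ 𝒮} ⊕ U)) (e : U) :
    scK 𝒮 (Z.erase (Sum.inr e)) = scK 𝒮 Z := by
  unfold scK
  congr 1
  apply Finset.filter_congr
  intro B _
  simp

lemma scK_erase_inl (𝒮 : Finset (Finset U)) (Z : Finset ({A // A ∈ 𝒮} ⊕ U))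
    {B₀ : {A // A ∈ 𝒮}} (hB₀ : Sum.inl B₀ ∈ Z) :
    scK 𝒮 (Z.erase (Sum.inl B₀)) = scK 𝒮 Z - 1 := by
  unfold scK
  have : (Finset.univ.filter fun B : {A // A ∈ 𝒮} => Sum.inl B ∈ Z.erase (Sum.inl B₀))
      = (Finset.univ.filter fun B : {A // A ∈ 𝒮} => Sum.inl B ∈ Z).erase B₀ := by
    ext B
    simp [Finset.mem_erase, and_comm]
  rw [this, Finset.card_erase_of_mem (by simp [hB₀])]

lemma scR_erase (𝒮 : Finset (Finset U)) (v : U) {Z : Finset ({A // A ∈ 𝒮} ⊕ U)}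
    (hR : scR 𝒮 v Z) (u : {A // A ∈ 𝒮} ⊕ U) : scR 𝒮 v (Z.erase u) :=
  ⟨fun h => hR.1 (Finset.mem_of_mem_erase h),
   fun B hB => hR.2 B (Finset.mem_of_mem_erase hB)⟩

end SetCover

section Gen2
variable {V : Type} [Fintype V] [DecidableEq V]

lemma coef_total [Nonempty V] (G : FitnessGraph V) (X : Finset V) :
    ∑ u, ∑ w, G.fit X u / G.totalFit X * G.w u w = 1 := by
  have h2 : ∀ u : V, ∑ w : V, G.fit X u / G.totalFit X * G.w u w
      = G.fit X u / G.totalFit X := by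
    intro u; rw [← Finset.mul_sum, G.w_rowsum, mul_one]
  rw [Finset.sum_congr rfl fun u _ => h2 u, ← Finset.sum_div]
  exact div_self (ne_of_gt (totalFit_pos G X))

end Gen2

section SetCover2
set_option linter.unusedSectionVars false
variable {U : Type} [Fintype U] [DecidableEq U]

/-- Pointwise adjustment used in the subharmonicity estimate. -/
noncomputable def scAdj (𝒮 : Finset (Finset U)) (ρ : ℝ) (Z : Finset ({A // A ∈ 𝒮} ⊕ U)) :
    ({A // A ∈ 𝒮} ⊕ U) → ({A // A ∈ 𝒮} ⊕ U) → ℝ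
  | Sum.inr e, Sum.inl B =>
      if Sum.inr e ∈ Z then (if Sum.inl B ∈ Z then 0 else -(ρ ^ scK 𝒮 Z))
      else (if Sum.inl B ∈ Z then ρ ^ (scK 𝒮 Z - 1) - ρ ^ scK 𝒮 Z else 0)
  | _, _ => 0

@[simp] lemma scAdj_inl (𝒮 : Finset (Finset U)) (ρ : ℝ) (Z : Finset ({A // A ∈ 𝒮} ⊕ U))
    (a : {A // A ∈ 𝒮}) (w : {A // A ∈ 𝒮} ⊕ U) : scAdj 𝒮 ρ Z (Sum.inl a) w = 0 := by
  cases w <;> rfl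

@[simp] lemma scAdj_inr_inr (𝒮 : Finset (Finset U)) (ρ : ℝ) (Z : Finset ({A // A ∈ 𝒮} ⊕ U))
    (e e' : U) : scAdj 𝒮 ρ Z (Sum.inr e) (Sum.inr e') = 0 := rfl

lemma scAdj_inr_inl (𝒮 : Finset (Finset U)) (ρ : ℝ) (Z : Finset ({A // A ∈ 𝒮} ⊕ U))
    (e : U) (B : {A // A ∈ 𝒮}) : scAdj 𝒮 ρ Z (Sum.inr e) (Sum.inl B)
      = if Sum.inr e ∈ Z then (if Sum.inl B ∈ Z then 0 else -(ρ ^ scK 𝒮 Z))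
        else (if Sum.inl B ∈ Z then ρ ^ (scK 𝒮 Z - 1) - ρ ^ scK 𝒮 Z else 0) := rfl

end SetCover2

section SetCover3
set_option linter.unusedSectionVars false
set_option maxHeartbeats 1000000
variable {U : Type} [Fintype U] [DecidableEq U]

lemma sc_subharmonic [Nonempty U] (𝒮 : Finset (Finset U)) (x y ρ : ℝ)
    (hx : 1 ≤ x) (hy0 : 0 < y) (hy1 : y ≤ 1)
    (G : FitnessGraph ({A // A ∈ 𝒮} ⊕ U)) (hG : IsSetCoverGraph 𝒮 x y G) (v : U)
    (h𝒮 : 𝒮.Nonempty) (hρ0 : 0 < ρ) (hρ1 : ρ ≤ 1)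
    (hkey : (1 - ρ) * (1 / (Fintype.card ({A // A ∈ 𝒮} ⊕ U) : ℝ))
        = ρ * (((Fintype.card ({A // A ∈ 𝒮} ⊕ U) : ℝ) - 1) * y))
    (Z : Finset ({A // A ∈ 𝒮} ⊕ U)) :
    scg 𝒮 v ρ Z ≤ ∑ Y, stopStep G (scA 𝒮) Z Y * scg 𝒮 v ρ Y := by
  have hVne : Nonempty ({A // A ∈ 𝒮} ⊕ U) := ⟨Sum.inr (Classical.arbitrary U)⟩
  obtain ⟨hw1, hw2, hw3, hw4, hm1, hm2, hr⟩ := hG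
  by_cases hZA : Z ∈ scA 𝒮
  · simp only [stopStep, if_pos hZA, ite_mul, one_mul, zero_mul, Finset.sum_ite_eq',
      Finset.mem_univ, if_true, le_refl]
  by_cases hR : scR 𝒮 v Z
  swap
  · rw [scg, if_neg hR]
    exact Finset.sum_nonneg fun Y _ =>
      mul_nonneg (stopStep_nonneg G _ Z Y) (scg_nonneg 𝒮 v hρ0.le Y)
  -- main case
  set nR : ℝ := (Fintype.card ({A // A ∈ 𝒮} ⊕ U) : ℝ) with hnR
  set kk := scK 𝒮 Z with hkk
  set F := G.totalFit Z with hFdef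
  have hFpos : 0 < F := totalFit_pos G Z
  have hkk1 : 1 ≤ kk := by
    obtain ⟨B, hB⟩ := scK_pos 𝒮 hZA
    exact Finset.card_pos.2 ⟨B, Finset.mem_filter.2 ⟨Finset.mem_univ B, hB⟩⟩
  have hsRpos : (0:ℝ) < (𝒮.card : ℝ) := by exact_mod_cast Finset.card_pos.2 h𝒮
  have hsn : (𝒮.card : ℝ) ≤ nR := by
    rw [hnR]
    have : Fintype.card ({A // A ∈ 𝒮} ⊕ U) = 𝒮.card + Fintype.card U := by
      simp [Fintype.card_sum, Fintype.card_coe]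
    rw [this]
    push_cast
    have : (0:ℝ) ≤ (Fintype.card U : ℝ) := by positivity
    linarith
  have hUn : (Fintype.card U : ℝ) ≤ nR := by
    rw [hnR]
    have : Fintype.card ({A // A ∈ 𝒮} ⊕ U) = 𝒮.card + Fintype.card U := by
      simp [Fintype.card_sum, Fintype.card_coe]
    rw [this]
    push_cast
    linarith
  have hnpos : (0:ℝ) < nR := lt_of_lt_of_le hsRpos hsn
  set Δ : ℝ := ρ ^ (kk - 1) - ρ ^ kk with hΔdef
  have hΔ0 : 0 ≤ Δ :=
    sub_nonneg.2 (pow_le_pow_of_le_one hρ0.le hρ1 (Nat.sub_le kk 1))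
  -- rewrite the RHS using step_apply
  have hrw : (∑ Y, stopStep G (scA 𝒮) Z Y * scg 𝒮 v ρ Y)
      = ∑ u, ∑ w, (G.fit Z u / F) * G.w u w * scg 𝒮 v ρ (moranNext Z u w) := by
    have : ∀ Y, stopStep G (scA 𝒮) Z Y = G.step Z Y := fun Y => if_neg hZA
    rw [Finset.sum_congr rfl fun Y _ => by rw [this Y]]
    exact step_apply G Z (scg 𝒮 v ρ)
  rw [hrw, scg, if_pos hR]
  -- pointwise estimate
  have hpoint : ∀ u w, G.fit Z u / F * G.w u w * (ρ ^ kk + scAdj 𝒮 ρ Z u w)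
      ≤ G.fit Z u / F * G.w u w * scg 𝒮 v ρ (moranNext Z u w) := by
    intro u w
    have hc : 0 ≤ G.fit Z u / F * G.w u w := coef_nonneg G Z u w
    obtain a | e := u <;> obtain b | e' := w
    · rw [hw2]; simp
    · -- inl a, inr e'
      rw [scAdj_inl, add_zero]
      by_cases he : e' ∈ a.1
      · have hgnext : scg 𝒮 v ρ (moranNext Z (Sum.inl a) (Sum.inr e')) = ρ ^ kk := by
          unfold moranNext
          by_cases haZ : Sum.inl a ∈ Z
          · rw [if_pos haZ, scg, if_pos ?_, scK_insert_inr]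
            constructor
            · intro hmem
              rcases Finset.mem_insert.1 hmem with h | h
              · exact (hR.2 a haZ) (by rwa [← Sum.inr.inj h] at he)
              · exact hR.1 h
            · intro B hB
              rcases Finset.mem_insert.1 hB with h | h
              · exact absurd h (by simp)
              · exact hR.2 B h
          · rw [if_neg haZ, scg, if_pos (scR_erase 𝒮 v hR _), scK_erase_inr]
        rw [hgnext]
      · rw [hw1, if_neg he]
        simp
    · -- inr e, inl b
      rw [scAdj_inr_inl]
      by_cases heZ : Sum.inr e ∈ Z <;> by_cases hbZ : Sum.inl b ∈ Z
      · -- both in: next = Z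
        rw [if_pos heZ, if_pos hbZ, add_zero]
        have : moranNext Z (Sum.inr e) (Sum.inl b) = Z := by
          unfold moranNext
          rw [if_pos heZ, Finset.insert_eq_self.2 hbZ]
        rw [this, scg, if_pos hR]
      · -- e in, b out
        rw [if_pos heZ, if_neg hbZ, add_neg_cancel, mul_zero]
        exact mul_nonneg hc (scg_nonneg 𝒮 v hρ0.le _)
      · -- e out, b in: erase
        rw [if_neg heZ, if_pos hbZ]
        have : moranNext Z (Sum.inr e) (Sum.inl b) = Z.erase (Sum.inl b) := by
          unfold moranNext; rw [if_neg heZ]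
        rw [this, scg, if_pos (scR_erase 𝒮 v hR _), scK_erase_inl 𝒮 Z hbZ, ← hkk]
        have : ρ ^ kk + (ρ ^ (kk - 1) - ρ ^ kk) = ρ ^ (kk - 1) := by ring
        rw [this]
      · -- both out: next = Z
        rw [if_neg heZ, if_neg hbZ, add_zero]
        have : moranNext Z (Sum.inr e) (Sum.inl b) = Z := by
          unfold moranNext
          rw [if_neg heZ, Finset.erase_eq_of_notMem hbZ]
        rw [this, scg, if_pos hR]
    · rw [hw4]; simp
  -- sum the pointwise estimate
  have hsum1 : ∑ u, ∑ w, G.fit Z u / F * G.w u w * (ρ ^ kk + scAdj 𝒮 ρ Z u w)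
      ≤ ∑ u, ∑ w, G.fit Z u / F * G.w u w * scg 𝒮 v ρ (moranNext Z u w) :=
    Finset.sum_le_sum fun u _ => Finset.sum_le_sum fun w _ => hpoint u w
  refine le_trans ?_ hsum1
  -- split the left side
  have hsplit : ∑ u, ∑ w, G.fit Z u / F * G.w u w * (ρ ^ kk + scAdj 𝒮 ρ Z u w)
      = (∑ u, ∑ w, G.fit Z u / F * G.w u w) * ρ ^ kk
        + ∑ u, ∑ w, G.fit Z u / F * G.w u w * scAdj 𝒮 ρ Z u w := by
    rw [Finset.sum_mul, ← Finset.sum_add_distrib]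
    refine Finset.sum_congr rfl fun u _ => ?_
    rw [Finset.sum_mul, ← Finset.sum_add_distrib]
    refine Finset.sum_congr rfl fun w _ => by ring
  rw [hsplit, coef_total G Z, one_mul, ← hkk]
  -- suffices: the adjustment total is nonnegative
  have hT : 0 ≤ ∑ u, ∑ w, G.fit Z u / F * G.w u w * scAdj 𝒮 ρ Z u w := by
    rw [Fintype.sum_sum_type]
    have hL : ∀ a : {A // A ∈ 𝒮},
        ∑ w, G.fit Z (Sum.inl a) / F * G.w (Sum.inl a) w * scAdj 𝒮 ρ Z (Sum.inl a) w = 0 := by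
      intro a; simp
    rw [Finset.sum_congr rfl fun a _ => hL a, Finset.sum_const, smul_zero, zero_add]
    -- now the element part
    have hinner : ∀ e : U,
        ∑ w, G.fit Z (Sum.inr e) / F * G.w (Sum.inr e) w * scAdj 𝒮 ρ Z (Sum.inr e) w
        = ∑ B : {A // A ∈ 𝒮},
            G.fit Z (Sum.inr e) / F * G.w (Sum.inr e) (Sum.inl B)
              * scAdj 𝒮 ρ Z (Sum.inr e) (Sum.inl B) := by
      intro e
      rw [Fintype.sum_sum_type]
      have : ∀ e' : U,
          G.fit Z (Sum.inr e) / F * G.w (Sum.inr e) (Sum.inr e')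
            * scAdj 𝒮 ρ Z (Sum.inr e) (Sum.inr e') = 0 := by
        intro e'; rw [scAdj_inr_inr, mul_zero]
      rw [Finset.sum_congr rfl fun e' _ => this e', Finset.sum_const, smul_zero, add_zero]
    rw [Finset.sum_congr rfl fun e _ => hinner e]
    set t : U → ℝ := fun e => ∑ B : {A // A ∈ 𝒮},
        G.fit Z (Sum.inr e) / F * G.w (Sum.inr e) (Sum.inl B)
          * scAdj 𝒮 ρ Z (Sum.inr e) (Sum.inl B) with htdef
    -- uniform lower bound for each element
    have hfitr : ∀ e : U, G.fit Z (Sum.inr e) = if Sum.inr e ∈ Z then y else 1 := by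
      intro e
      unfold FitnessGraph.fit
      split
      · exact hm2 e
      · exact hr _
    have htlow : ∀ e : U, -(y * ρ ^ kk) / F ≤ t e := by
      intro e
      have hpt : ∀ B : {A // A ∈ 𝒮}, -(y * ρ ^ kk) / (F * (𝒮.card : ℝ))
          ≤ G.fit Z (Sum.inr e) / F * G.w (Sum.inr e) (Sum.inl B)
              * scAdj 𝒮 ρ Z (Sum.inr e) (Sum.inl B) := by
        intro B
        rw [hfitr e, hw3, scAdj_inr_inl]
        by_cases heZ : Sum.inr e ∈ Z
        · rw [if_pos heZ, if_pos heZ]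
          by_cases hbZ : Sum.inl B ∈ Z
          · rw [if_pos hbZ, mul_zero]
            apply div_nonpos_of_nonpos_of_nonneg <;> nlinarith [pow_pos hρ0 kk]
          · rw [if_neg hbZ, ← hkk]
            apply le_of_eq
            field_simp
        · rw [if_neg heZ, if_neg heZ]
          have h1 : (0:ℝ) ≤ 1 / F * (1 / (𝒮.card : ℝ)) := by positivity
          have h2 : (0:ℝ) ≤ (if Sum.inl B ∈ Z then Δ else 0) := by
            split
            · exact hΔ0
            · exact le_refl 0
          have h3 : -(y * ρ ^ kk) / (F * (𝒮.card : ℝ)) ≤ 0 := by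
            apply div_nonpos_of_nonpos_of_nonneg <;> nlinarith [pow_pos hρ0 kk]
          calc -(y * ρ ^ kk) / (F * (𝒮.card : ℝ)) ≤ 0 := h3
            _ ≤ _ := mul_nonneg h1 h2
      calc -(y * ρ ^ kk) / F
          = (𝒮.card : ℝ) * (-(y * ρ ^ kk) / (F * (𝒮.card : ℝ))) := by
            field_simp
        _ = ∑ _B : {A // A ∈ 𝒮}, -(y * ρ ^ kk) / (F * (𝒮.card : ℝ)) := by
            rw [Finset.sum_const, Finset.card_univ, Fintype.card_coe, nsmul_eq_mul]
        _ ≤ t e := Finset.sum_le_sum fun B _ => hpt B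
    -- lower bound for v
    have htv : Δ / (F * (𝒮.card : ℝ)) ≤ t v := by
      obtain ⟨B₀, hB₀⟩ := scK_pos 𝒮 hZA
      have hterm : ∀ B : {A // A ∈ 𝒮},
          G.fit Z (Sum.inr v) / F * G.w (Sum.inr v) (Sum.inl B)
            * scAdj 𝒮 ρ Z (Sum.inr v) (Sum.inl B)
          = 1 / F * (1 / (𝒮.card : ℝ)) * (if Sum.inl B ∈ Z then Δ else 0) := by
        intro B
        rw [hfitr v, if_neg hR.1, hw3, scAdj_inr_inl, if_neg hR.1]
      have hnn : ∀ B ∈ Finset.univ, (0:ℝ) ≤ 1 / F * (1 / (𝒮.card : ℝ))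
          * (if Sum.inl B ∈ Z then Δ else 0) := by
        intro B _
        have h2 : (0:ℝ) ≤ (if Sum.inl B ∈ Z then Δ else 0) := by
          split
          · exact hΔ0
          · exact le_refl 0
        positivity
      calc Δ / (F * (𝒮.card : ℝ))
          = 1 / F * (1 / (𝒮.card : ℝ)) * (if Sum.inl B₀ ∈ Z then Δ else 0) := by
            rw [if_pos hB₀]; field_simp
        _ ≤ ∑ B : {A // A ∈ 𝒮}, 1 / F * (1 / (𝒮.card : ℝ))
              * (if Sum.inl B ∈ Z then Δ else 0) :=
            Finset.single_le_sum hnn (Finset.mem_univ B₀)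
        _ = t v := by
            rw [htdef]
            exact (Finset.sum_congr rfl fun B _ => (hterm B).symm)
    -- combine
    have hsplitv : ∑ e : U, t e = t v + ∑ e ∈ Finset.univ.erase v, t e :=
      (Finset.add_sum_erase _ t (Finset.mem_univ v)).symm
    have hrest : ((Fintype.card U : ℝ) - 1) * (-(y * ρ ^ kk) / F)
        ≤ ∑ e ∈ Finset.univ.erase v, t e := by
      calc ((Fintype.card U : ℝ) - 1) * (-(y * ρ ^ kk) / F)
          = ((Finset.univ.erase v).card : ℝ) * (-(y * ρ ^ kk) / F) := by
            rw [Finset.card_erase_of_mem (Finset.mem_univ v), Finset.card_univ]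
            have h1 : 1 ≤ Fintype.card U := Fintype.card_pos
            push_cast [Nat.cast_sub h1]
            ring
        _ = ∑ _e ∈ Finset.univ.erase v, -(y * ρ ^ kk) / F := by
            rw [Finset.sum_const, nsmul_eq_mul]
        _ ≤ _ := Finset.sum_le_sum fun e _ => htlow e
    -- final arithmetic
    have hfin : 0 ≤ Δ / (F * (𝒮.card : ℝ))
        + ((Fintype.card U : ℝ) - 1) * (-(y * ρ ^ kk) / F) := by
      have hpow : ρ ^ kk = ρ ^ (kk - 1) * ρ := by
        rw [← pow_succ, Nat.sub_add_cancel hkk1]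
      have hΔn : Δ * (1 / nR) = (nR - 1) * y * ρ ^ kk := by
        rw [hΔdef, hpow]
        linear_combination (ρ ^ (kk - 1)) * hkey
      have hinv : 1 / nR ≤ 1 / (𝒮.card : ℝ) := one_div_le_one_div_of_le hsRpos hsn
      have e1 : Δ * (1 / nR) ≤ Δ * (1 / (𝒮.card : ℝ)) :=
        mul_le_mul_of_nonneg_left hinv hΔ0
      have hyr : (0:ℝ) ≤ y * ρ ^ kk := by positivity
      have e2 : ((Fintype.card U : ℝ) - 1) * (y * ρ ^ kk) ≤ (nR - 1) * (y * ρ ^ kk) := by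
        have : (Fintype.card U : ℝ) - 1 ≤ nR - 1 := by linarith
        exact mul_le_mul_of_nonneg_right this hyr
      have e3 : ((Fintype.card U : ℝ) - 1) * (y * ρ ^ kk) ≤ Δ * (1 / (𝒮.card : ℝ)) := by
        calc ((Fintype.card U : ℝ) - 1) * (y * ρ ^ kk) ≤ (nR - 1) * (y * ρ ^ kk) := e2
          _ = Δ * (1 / nR) := by rw [hΔn]; ring
          _ ≤ Δ * (1 / (𝒮.card : ℝ)) := e1
      have hFinv : (0:ℝ) ≤ 1 / F := by positivity
      have e4 : ((Fintype.card U : ℝ) - 1) * (y * ρ ^ kk) * (1 / F)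
          ≤ Δ * (1 / (𝒮.card : ℝ)) * (1 / F) := mul_le_mul_of_nonneg_right e3 hFinv
      have hid1 : Δ / (F * (𝒮.card : ℝ)) = Δ * (1 / (𝒮.card : ℝ)) * (1 / F) := by
        rw [mul_one_div, mul_one_div, div_div, mul_comm (𝒮.card:ℝ) F]
      have hid2 : ((Fintype.card U : ℝ) - 1) * (-(y * ρ ^ kk) / F)
          = -(((Fintype.card U : ℝ) - 1) * (y * ρ ^ kk) * (1 / F)) := by
        field_simp
      rw [hid1, hid2]
      linarith
    calc (0:ℝ) ≤ Δ / (F * (𝒮.card : ℝ))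
        + ((Fintype.card U : ℝ) - 1) * (-(y * ρ ^ kk) / F) := hfin
      _ ≤ t v + ∑ e ∈ Finset.univ.erase v, t e := add_le_add htv hrest
      _ = ∑ e : U, t e := hsplitv.symm
  linarith

end SetCover3

section SetCover4
set_option linter.unusedSectionVars false
set_option maxHeartbeats 1000000
variable {U : Type} [Fintype U] [DecidableEq U]

lemma sc_totalFit_le [Nonempty U] (𝒮 : Finset (Finset U)) (x y : ℝ)
    (hx : 1 ≤ x) (hy1 : y ≤ 1)
    (G : FitnessGraph ({A // A ∈ 𝒮} ⊕ U)) (hG : IsSetCoverGraph 𝒮 x y G)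
    (Z : Finset ({A // A ∈ 𝒮} ⊕ U)) :
    G.totalFit Z ≤ (Fintype.card ({A // A ∈ 𝒮} ⊕ U) : ℝ) * x := by
  obtain ⟨hw1, hw2, hw3, hw4, hm1, hm2, hr⟩ := hG
  unfold FitnessGraph.totalFit
  have hfit : ∀ u : {A // A ∈ 𝒮} ⊕ U, G.fit Z u ≤ x := by
    intro u
    unfold FitnessGraph.fit
    split
    · obtain a | e := u
      · rw [hm1]
      · rw [hm2]; linarith
    · rw [hr]; exact hx
  calc ∑ u, G.fit Z u ≤ ∑ _u : {A // A ∈ 𝒮} ⊕ U, x :=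
        Finset.sum_le_sum fun u _ => hfit u
    _ = (Fintype.card ({A // A ∈ 𝒮} ⊕ U) : ℝ) * x := by
        rw [Finset.sum_const, Finset.card_univ, nsmul_eq_mul]

lemma sc_absorb [Nonempty U] (𝒮 : Finset (Finset U)) (x y : ℝ)
    (hx : 1 ≤ x) (hy0 : 0 < y) (hy1 : y ≤ 1)
    (G : FitnessGraph ({A // A ∈ 𝒮} ⊕ U)) (hG : IsSetCoverGraph 𝒮 x y G) (v : U)
    (h𝒮 : 𝒮.Nonempty) :
    ∀ (j : ℕ) (Z : Finset ({A // A ∈ 𝒮} ⊕ U)), scR 𝒮 v Z → scK 𝒮 Z ≤ j →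
      (1 / (((Fintype.card ({A // A ∈ 𝒮} ⊕ U) : ℝ) * x) * (𝒮.card : ℝ))) ^ j
        ≤ ∑ Y ∈ Finset.univ.filter (fun Y => Y ∈ scA 𝒮), stopStepN G (scA 𝒮) j Z Y := by
  have hVne : Nonempty ({A // A ∈ 𝒮} ⊕ U) := ⟨Sum.inr (Classical.arbitrary U)⟩
  have hsRpos : (0:ℝ) < (𝒮.card : ℝ) := by exact_mod_cast Finset.card_pos.2 h𝒮
  have hnpos : (0:ℝ) < (Fintype.card ({A // A ∈ 𝒮} ⊕ U) : ℝ) := by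
    exact_mod_cast Fintype.card_pos
  set nR : ℝ := (Fintype.card ({A // A ∈ 𝒮} ⊕ U) : ℝ) with hnR
  set δ₀ : ℝ := 1 / ((nR * x) * (𝒮.card : ℝ)) with hδ₀
  have hxpos : (0:ℝ) < x := lt_of_lt_of_le zero_lt_one hx
  have hprodpos : (0:ℝ) < (nR * x) * (𝒮.card : ℝ) := mul_pos (mul_pos hnpos hxpos) hsRpos
  have hδ₀pos : 0 < δ₀ := by
    rw [hδ₀]
    positivity
  have hδ₀le1 : δ₀ ≤ 1 := by
    rw [hδ₀, div_le_one hprodpos]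
    have h1 : (1:ℝ) ≤ nR := by
      rw [hnR]; exact_mod_cast Fintype.card_pos
    have h2 : (1:ℝ) ≤ (𝒮.card : ℝ) := by exact_mod_cast Finset.card_pos.2 h𝒮
    have hnx1 : (1:ℝ) ≤ nR * x := by
      calc (1:ℝ) = 1 * 1 := by norm_num
        _ ≤ nR * x := mul_le_mul h1 hx zero_le_one (le_trans zero_le_one h1)
    calc (1:ℝ) = 1 * 1 := by norm_num
      _ ≤ (nR * x) * (𝒮.card : ℝ) :=
        mul_le_mul hnx1 h2 zero_le_one (le_trans zero_le_one hnx1)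
  intro j
  induction j with
  | zero =>
      intro Z hR hk
      have hZA : Z ∈ scA 𝒮 := by
        intro B
        have hempty : (Finset.univ.filter fun B : {A // A ∈ 𝒮} => Sum.inl B ∈ Z) = ∅ :=
          Finset.card_eq_zero.1 (Nat.le_zero.1 hk)
        intro hB
        have : B ∈ (Finset.univ.filter fun B : {A // A ∈ 𝒮} => Sum.inl B ∈ Z) :=
          Finset.mem_filter.2 ⟨Finset.mem_univ B, hB⟩
        rw [hempty] at this
        exact absurd this (Finset.notMem_empty B)
      rw [pow_zero]
      calc (1:ℝ) = stopStepN G (scA 𝒮) 0 Z Z := by simp [stopStepN]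
        _ ≤ _ := Finset.single_le_sum
            (fun Y _ => stopStepN_nonneg G (scA 𝒮) 0 Z Y)
            (Finset.mem_filter.2 ⟨Finset.mem_univ Z, hZA⟩)
  | succ j ih =>
      intro Z hR hk
      by_cases hZA : Z ∈ scA 𝒮
      · calc δ₀ ^ (j+1) ≤ 1 := pow_le_one₀ hδ₀pos.le hδ₀le1
          _ = stopStepN G (scA 𝒮) (j+1) Z Z := by
              rw [stopStepN_absorbed G (scA 𝒮) hZA, if_pos rfl]
          _ ≤ _ := Finset.single_le_sum
              (fun Y _ => stopStepN_nonneg G (scA 𝒮) (j+1) Z Y)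
              (Finset.mem_filter.2 ⟨Finset.mem_univ Z, hZA⟩)
      · obtain ⟨B₀, hB₀⟩ := scK_pos 𝒮 hZA
        set Z' := Z.erase (Sum.inl B₀) with hZ'
        have hR' : scR 𝒮 v Z' := scR_erase 𝒮 v hR _
        have hkk1 : 1 ≤ scK 𝒮 Z :=
          Finset.card_pos.2 ⟨B₀, Finset.mem_filter.2 ⟨Finset.mem_univ B₀, hB₀⟩⟩
        have hk' : scK 𝒮 Z' ≤ j := by
          rw [hZ', scK_erase_inl 𝒮 Z hB₀]
          omega
        have hQ' := ih Z' hR' hk'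
        have hFpos : 0 < G.totalFit Z := totalFit_pos G Z
        have hFle : G.totalFit Z ≤ nR * x :=
          sc_totalFit_le 𝒮 x y hx hy1 G hG Z
        obtain ⟨hw1, hw2, hw3, hw4, hm1, hm2, hr⟩ := hG
        have hstep : δ₀ ≤ stopStep G (scA 𝒮) Z Z' := by
          have hss : stopStep G (scA 𝒮) Z Z' = G.step Z Z' := if_neg hZA
          rw [hss]
          have hterm : δ₀ ≤ G.fit Z (Sum.inr v) / G.totalFit Z
              * G.w (Sum.inr v) (Sum.inl B₀)
              * (if moranNext Z (Sum.inr v) (Sum.inl B₀) = Z' then 1 else 0) := by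
            have hmn : moranNext Z (Sum.inr v) (Sum.inl B₀) = Z' := by
              unfold moranNext
              rw [if_neg hR.1]
            rw [hmn, if_pos rfl, mul_one]
            have hfv : G.fit Z (Sum.inr v) = 1 := by
              unfold FitnessGraph.fit
              rw [if_neg hR.1, hr]
            rw [hfv, hw3, hδ₀]
            rw [div_mul_div_comm, one_mul]
            apply one_div_le_one_div_of_le
            · positivity
            · exact mul_le_mul_of_nonneg_right hFle hsRpos.le
          calc δ₀ ≤ _ := hterm
            _ ≤ ∑ w, G.fit Z (Sum.inr v) / G.totalFit Z * G.w (Sum.inr v) w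
                * (if moranNext Z (Sum.inr v) w = Z' then 1 else 0) := by
              refine Finset.single_le_sum
                (f := fun w => G.fit Z (Sum.inr v) / G.totalFit Z * G.w (Sum.inr v) w
                  * (if moranNext Z (Sum.inr v) w = Z' then 1 else 0))
                (fun w _ => ?_) (Finset.mem_univ (Sum.inl B₀))
              refine mul_nonneg (coef_nonneg G Z _ w) ?_
              split <;> norm_num
            _ ≤ G.step Z Z' := by
              refine Finset.single_le_sum
                (f := fun u => ∑ w, G.fit Z u / G.totalFit Z * G.w u w
                  * (if moranNext Z u w = Z' then 1 else 0))
                (fun u _ => ?_) (Finset.mem_univ (Sum.inr v))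
              refine Finset.sum_nonneg fun w _ => ?_
              refine mul_nonneg (coef_nonneg G Z u w) ?_
              split <;> norm_num
        calc δ₀ ^ (j+1) = δ₀ * δ₀ ^ j := by rw [pow_succ]; ring
          _ ≤ stopStep G (scA 𝒮) Z Z'
              * ∑ Y ∈ Finset.univ.filter (fun Y => Y ∈ scA 𝒮), stopStepN G (scA 𝒮) j Z' Y :=
            mul_le_mul hstep hQ' (pow_nonneg hδ₀pos.le j) (stopStep_nonneg G _ Z Z')
          _ ≤ ∑ W, stopStep G (scA 𝒮) Z W
              * ∑ Y ∈ Finset.univ.filter (fun Y => Y ∈ scA 𝒮), stopStepN G (scA 𝒮) j W Y := by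
            refine Finset.single_le_sum
              (f := fun W => stopStep G (scA 𝒮) Z W
                * ∑ Y ∈ Finset.univ.filter (fun Y => Y ∈ scA 𝒮), stopStepN G (scA 𝒮) j W Y)
              (fun W _ => ?_) (Finset.mem_univ Z')
            exact mul_nonneg (stopStep_nonneg G _ Z W)
              (Finset.sum_nonneg fun Y _ => stopStepN_nonneg G _ j W Y)
          _ = ∑ Y ∈ Finset.univ.filter (fun Y => Y ∈ scA 𝒮), stopStepN G (scA 𝒮) (j+1) Z Y := by
            rw [Finset.sum_congr rfl fun W (_ : W ∈ Finset.univ) => Finset.mul_sum _ _ _]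
            rw [Finset.sum_comm]
            exact Finset.sum_congr rfl fun Y _ => (stopStepN_succ_left G (scA 𝒮) j Z Y).symm

end SetCover4

section SetCover5
set_option linter.unusedSectionVars false
set_option maxHeartbeats 1000000
variable {U : Type} [Fintype U] [DecidableEq U]

/-- Probability of being absorbed in `scA` by time `t`. -/
noncomputable def scP (𝒮 : Finset (Finset U)) (G : FitnessGraph ({A // A ∈ 𝒮} ⊕ U))
    (X₁ : Finset ({A // A ∈ 𝒮} ⊕ U)) (t : ℕ) : ℝ :=
  ∑ Y ∈ Finset.univ.filter (fun Y => Y ∈ scA 𝒮), stopStepN G (scA 𝒮) t X₁ Y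

/-- Probability of being in the region but not absorbed at time `t`. -/
noncomputable def scB (𝒮 : Finset (Finset U)) (v : U) (G : FitnessGraph ({A // A ∈ 𝒮} ⊕ U))
    (X₁ : Finset ({A // A ∈ 𝒮} ⊕ U)) (t : ℕ) : ℝ :=
  ∑ Y ∈ Finset.univ.filter (fun Y => Y ∉ scA 𝒮 ∧ scR 𝒮 v Y), stopStepN G (scA 𝒮) t X₁ Y

end SetCover5


/-- From any configuration `X₁` containing an uncovered resident element of the universe,
the process reaches a configuration with no mutants in `V₁` with probability at least
`((1/n)/((1/n)+(n−1)y))^{|V₁|}`. -/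
theorem reach_no_mutant_sets {U : Type} [Fintype U] [DecidableEq U] [Nonempty U]
    (𝒮 : Finset (Finset U)) (hne : ∀ A ∈ 𝒮, A.Nonempty) (hcov : ∀ e : U, ∃ A ∈ 𝒮, e ∈ A)
    (x y : ℝ) (hx : 1 ≤ x) (hy0 : 0 < y) (hy1 : y ≤ 1)
    (G : FitnessGraph ({A // A ∈ 𝒮} ⊕ U)) (hG : IsSetCoverGraph 𝒮 x y G)
    (X₁ : Finset ({A // A ∈ 𝒮} ⊕ U)) (v : U)
    (hv : Sum.inr v ∉ X₁) (hvUncov : ∀ A : {A // A ∈ 𝒮}, Sum.inl A ∈ X₁ → v ∉ A.1) :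
    ((1 / (Fintype.card ({A // A ∈ 𝒮} ⊕ U) : ℝ)) /
        (1 / (Fintype.card ({A // A ∈ 𝒮} ⊕ U) : ℝ) +
          ((Fintype.card ({A // A ∈ 𝒮} ⊕ U) : ℝ) - 1) * y)) ^ 𝒮.card ≤
      reachProb G {X₂ | ∀ A : {A // A ∈ 𝒮}, Sum.inl A ∉ X₂} X₁ := by
  classical
  have hVne : Nonempty ({A // A ∈ 𝒮} ⊕ U) := ⟨Sum.inr (Classical.arbitrary U)⟩
  have h𝒮 : 𝒮.Nonempty := by
    obtain ⟨A, hA, _⟩ := hcov (Classical.arbitrary U)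
    exact ⟨A, hA⟩
  show _ ≤ reachProb G (scA 𝒮) X₁
  have hsRpos : (0:ℝ) < (𝒮.card : ℝ) := by exact_mod_cast Finset.card_pos.2 h𝒮
  have hsR1 : (1:ℝ) ≤ (𝒮.card : ℝ) := by exact_mod_cast Finset.card_pos.2 h𝒮
  set nR : ℝ := (Fintype.card ({A // A ∈ 𝒮} ⊕ U) : ℝ) with hnR
  have hn1 : (1:ℝ) ≤ nR := by rw [hnR]; exact_mod_cast Fintype.card_pos
  have hnpos : (0:ℝ) < nR := lt_of_lt_of_le zero_lt_one hn1
  set ρ : ℝ := 1 / nR / (1 / nR + (nR - 1) * y) with hρ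
  have hden : (0:ℝ) < 1 / nR + (nR - 1) * y := by
    have h1 : (0:ℝ) < 1 / nR := by positivity
    have h2 : (0:ℝ) ≤ (nR - 1) * y := mul_nonneg (by linarith) hy0.le
    linarith
  have hρ0 : 0 < ρ := by rw [hρ]; positivity
  have hρ1 : ρ ≤ 1 := by
    rw [hρ, div_le_one hden]
    have : (0:ℝ) ≤ (nR - 1) * y := mul_nonneg (by linarith) hy0.le
    linarith
  have hρmul : ρ * (1 / nR + (nR - 1) * y) = 1 / nR := div_mul_cancel₀ _ hden.ne'
  have hkey : (1 - ρ) * (1 / nR) = ρ * ((nR - 1) * y) := by linear_combination -hρmul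
  -- δ
  have hxpos : (0:ℝ) < x := lt_of_lt_of_le zero_lt_one hx
  set δ₀ : ℝ := 1 / ((nR * x) * (𝒮.card : ℝ)) with hδ₀
  have hδ₀pos : 0 < δ₀ := by rw [hδ₀]; positivity
  set δ : ℝ := δ₀ ^ 𝒮.card with hδ
  have hδpos : 0 < δ := pow_pos hδ₀pos _
  -- basic bounds on scP, scB
  have hP0 : ∀ t, 0 ≤ scP 𝒮 G X₁ t := fun t =>
    Finset.sum_nonneg fun Y _ => stopStepN_nonneg G (scA 𝒮) t X₁ Y
  have hB0 : ∀ t, 0 ≤ scB 𝒮 v G X₁ t := fun t =>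
    Finset.sum_nonneg fun Y _ => stopStepN_nonneg G (scA 𝒮) t X₁ Y
  have hPle1 : ∀ t, scP 𝒮 G X₁ t ≤ 1 := by
    intro t
    calc scP 𝒮 G X₁ t ≤ ∑ Y, stopStepN G (scA 𝒮) t X₁ Y :=
        Finset.sum_le_sum_of_subset_of_nonneg (Finset.filter_subset _ _)
          (fun Y _ _ => stopStepN_nonneg G (scA 𝒮) t X₁ Y)
      _ = 1 := stopStepN_rowsum G (scA 𝒮) t X₁
  have hreach : ∀ t, scP 𝒮 G X₁ t ≤ reachProb G (scA 𝒮) X₁ := by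
    intro t
    have hbdd : BddAbove (Set.range fun t =>
        ∑ Y ∈ Finset.univ.filter (fun Y => Y ∈ scA 𝒮), stopStepN G (scA 𝒮) t X₁ Y) := by
      refine ⟨1, ?_⟩
      rintro r ⟨s, rfl⟩
      exact hPle1 s
    exact le_ciSup hbdd t
  -- supermartingale property of the potential
  have hsub := sc_subharmonic 𝒮 x y ρ hx hy0 hy1 G hG v h𝒮 hρ0 hρ1 hkey
  have hM : ∀ t, scg 𝒮 v ρ X₁ ≤ ∑ Y, stopStepN G (scA 𝒮) t X₁ Y * scg 𝒮 v ρ Y := by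
    intro t
    induction t with
    | zero =>
        have : ∑ Y, stopStepN G (scA 𝒮) 0 X₁ Y * scg 𝒮 v ρ Y = scg 𝒮 v ρ X₁ := by
          simp [stopStepN, ite_mul, Finset.sum_ite_eq]
        rw [this]
    | succ t ih =>
        calc scg 𝒮 v ρ X₁ ≤ ∑ Z, stopStepN G (scA 𝒮) t X₁ Z * scg 𝒮 v ρ Z := ih
          _ ≤ ∑ Z, stopStepN G (scA 𝒮) t X₁ Z
              * ∑ Y, stopStep G (scA 𝒮) Z Y * scg 𝒮 v ρ Y :=
            Finset.sum_le_sum fun Z _ =>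
              mul_le_mul_of_nonneg_left (hsub Z) (stopStepN_nonneg G (scA 𝒮) t X₁ Z)
          _ = ∑ Y, stopStepN G (scA 𝒮) (t+1) X₁ Y * scg 𝒮 v ρ Y := by
            show _ = ∑ Y, (∑ Z, stopStepN G (scA 𝒮) t X₁ Z * stopStep G (scA 𝒮) Z Y)
                * scg 𝒮 v ρ Y
            simp only [Finset.mul_sum, Finset.sum_mul]
            rw [Finset.sum_comm]
            exact Finset.sum_congr rfl fun Y _ => Finset.sum_congr rfl fun Z _ => by ring
  -- potential is dominated by absorbed + region mass
  have hPB : ∀ t, ∑ Y, stopStepN G (scA 𝒮) t X₁ Y * scg 𝒮 v ρ Y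
      ≤ scP 𝒮 G X₁ t + scB 𝒮 v G X₁ t := by
    intro t
    have hpt : ∀ Y : Finset ({A // A ∈ 𝒮} ⊕ U),
        stopStepN G (scA 𝒮) t X₁ Y * scg 𝒮 v ρ Y
        ≤ (if Y ∈ scA 𝒮 then stopStepN G (scA 𝒮) t X₁ Y else 0)
          + (if Y ∉ scA 𝒮 ∧ scR 𝒮 v Y then stopStepN G (scA 𝒮) t X₁ Y else 0) := by
      intro Y
      have hq := stopStepN_nonneg G (scA 𝒮) t X₁ Y
      have hmul : stopStepN G (scA 𝒮) t X₁ Y * scg 𝒮 v ρ Y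
          ≤ stopStepN G (scA 𝒮) t X₁ Y := by
        calc stopStepN G (scA 𝒮) t X₁ Y * scg 𝒮 v ρ Y
            ≤ stopStepN G (scA 𝒮) t X₁ Y * 1 :=
            mul_le_mul_of_nonneg_left (scg_le_one 𝒮 v hρ0.le hρ1 Y) hq
          _ = _ := mul_one _
      by_cases hYA : Y ∈ scA 𝒮
      · rw [if_pos hYA, if_neg (by tauto), add_zero]
        exact hmul
      · by_cases hYR : scR 𝒮 v Y
        · rw [if_neg hYA, if_pos ⟨hYA, hYR⟩, zero_add]
          exact hmul
        · rw [if_neg hYA, if_neg (by tauto), add_zero]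
          rw [scg, if_neg hYR, mul_zero]
    calc ∑ Y, stopStepN G (scA 𝒮) t X₁ Y * scg 𝒮 v ρ Y
        ≤ ∑ Y, ((if Y ∈ scA 𝒮 then stopStepN G (scA 𝒮) t X₁ Y else 0)
          + (if Y ∉ scA 𝒮 ∧ scR 𝒮 v Y then stopStepN G (scA 𝒮) t X₁ Y else 0)) :=
          Finset.sum_le_sum fun Y _ => hpt Y
      _ = scP 𝒮 G X₁ t + scB 𝒮 v G X₁ t := by
          rw [Finset.sum_add_distrib]
          unfold scP scB
          rw [Finset.sum_filter, Finset.sum_filter]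
  -- one sweep of m steps absorbs a δ-fraction of the region mass
  have habs := sc_absorb 𝒮 x y hx hy0 hy1 G hG v h𝒮
  have hPstep : ∀ t, scP 𝒮 G X₁ t + δ * scB 𝒮 v G X₁ t ≤ scP 𝒮 G X₁ (t + 𝒮.card) := by
    intro t
    have hPexp : scP 𝒮 G X₁ (t + 𝒮.card)
        = ∑ Z, stopStepN G (scA 𝒮) t X₁ Z
            * ∑ Y ∈ Finset.univ.filter (fun Y => Y ∈ scA 𝒮),
                stopStepN G (scA 𝒮) 𝒮.card Z Y := by
      unfold scP
      rw [Finset.sum_congr rfl fun Y (_ : Y ∈ Finset.univ.filter (fun Y => Y ∈ scA 𝒮)) =>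
        stopStepN_add G (scA 𝒮) t 𝒮.card X₁ Y]
      rw [Finset.sum_comm]
      exact Finset.sum_congr rfl fun Z _ => (Finset.mul_sum _ _ _).symm
    rw [hPexp]
    have hpt : ∀ Z : Finset ({A // A ∈ 𝒮} ⊕ U),
        (if Z ∈ scA 𝒮 then stopStepN G (scA 𝒮) t X₁ Z else 0)
          + δ * (if Z ∉ scA 𝒮 ∧ scR 𝒮 v Z then stopStepN G (scA 𝒮) t X₁ Z else 0)
        ≤ stopStepN G (scA 𝒮) t X₁ Z
            * ∑ Y ∈ Finset.univ.filter (fun Y => Y ∈ scA 𝒮),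
                stopStepN G (scA 𝒮) 𝒮.card Z Y := by
      intro Z
      have hq := stopStepN_nonneg G (scA 𝒮) t X₁ Z
      have hQnn : 0 ≤ ∑ Y ∈ Finset.univ.filter (fun Y => Y ∈ scA 𝒮),
          stopStepN G (scA 𝒮) 𝒮.card Z Y :=
        Finset.sum_nonneg fun Y _ => stopStepN_nonneg G (scA 𝒮) _ Z Y
      by_cases hZA : Z ∈ scA 𝒮
      · have hQ1 : ∑ Y ∈ Finset.univ.filter (fun Y => Y ∈ scA 𝒮),
            stopStepN G (scA 𝒮) 𝒮.card Z Y = 1 := by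
          rw [Finset.sum_congr rfl fun Y (_ : Y ∈ Finset.univ.filter (fun Y => Y ∈ scA 𝒮)) =>
            stopStepN_absorbed G (scA 𝒮) hZA 𝒮.card Y]
          rw [Finset.sum_ite_eq]
          simp [hZA]
        rw [hQ1, mul_one, if_pos hZA, if_neg (by tauto), mul_zero, add_zero]
      · by_cases hZR : scR 𝒮 v Z
        · have hQδ : δ ≤ ∑ Y ∈ Finset.univ.filter (fun Y => Y ∈ scA 𝒮),
              stopStepN G (scA 𝒮) 𝒮.card Z Y := by
            rw [hδ, hδ₀]
            exact habs 𝒮.card Z hZR (scK_le 𝒮 Z)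
          rw [if_neg hZA, if_pos ⟨hZA, hZR⟩, zero_add, mul_comm δ]
          exact mul_le_mul_of_nonneg_left hQδ hq
        · rw [if_neg hZA, if_neg (by tauto), mul_zero, add_zero]
          exact mul_nonneg hq hQnn
    calc scP 𝒮 G X₁ t + δ * scB 𝒮 v G X₁ t
        = ∑ Z, ((if Z ∈ scA 𝒮 then stopStepN G (scA 𝒮) t X₁ Z else 0)
          + δ * (if Z ∉ scA 𝒮 ∧ scR 𝒮 v Z then stopStepN G (scA 𝒮) t X₁ Z else 0)) := by
          rw [Finset.sum_add_distrib, ← Finset.mul_sum]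
          unfold scP scB
          rw [Finset.sum_filter, Finset.sum_filter]
      _ ≤ _ := Finset.sum_le_sum fun Z _ => hpt Z
  -- telescoping
  have htel : ∀ K : ℕ, δ * (∑ i ∈ Finset.range K, scB 𝒮 v G X₁ (i * 𝒮.card))
      ≤ scP 𝒮 G X₁ (K * 𝒮.card) := by
    intro K
    induction K with
    | zero => simpa using hP0 0
    | succ K ih =>
        rw [Finset.sum_range_succ, mul_add]
        calc δ * ∑ i ∈ Finset.range K, scB 𝒮 v G X₁ (i * 𝒮.card)
              + δ * scB 𝒮 v G X₁ (K * 𝒮.card)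
            ≤ scP 𝒮 G X₁ (K * 𝒮.card) + δ * scB 𝒮 v G X₁ (K * 𝒮.card) := by linarith
          _ ≤ scP 𝒮 G X₁ (K * 𝒮.card + 𝒮.card) := hPstep _
          _ = scP 𝒮 G X₁ ((K + 1) * 𝒮.card) := by rw [Nat.succ_mul]
  -- initial potential
  have hgX1 : ρ ^ 𝒮.card ≤ scg 𝒮 v ρ X₁ := by
    have hRX : scR 𝒮 v X₁ := ⟨hv, hvUncov⟩
    rw [scg, if_pos hRX]
    exact pow_le_pow_of_le_one hρ0.le hρ1 (scK_le 𝒮 X₁)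
  -- conclusion
  refine le_of_forall_pos_le_add ?_
  intro ε hε
  obtain ⟨K, hK⟩ := exists_nat_gt ((1 : ℝ) / (δ * ε))
  have hex : ∃ i : ℕ, scB 𝒮 v G X₁ (i * 𝒮.card) < ε := by
    by_contra hcon
    push_neg at hcon
    have hsumlow : (K:ℝ) * ε ≤ ∑ i ∈ Finset.range K, scB 𝒮 v G X₁ (i * 𝒮.card) := by
      calc (K:ℝ) * ε = ∑ _i ∈ Finset.range K, ε := by
            rw [Finset.sum_const, Finset.card_range, nsmul_eq_mul]
        _ ≤ _ := Finset.sum_le_sum fun i _ => hcon _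
    have h2 : δ * ((K:ℝ) * ε) ≤ 1 :=
      le_trans (mul_le_mul_of_nonneg_left hsumlow hδpos.le)
        (le_trans (htel K) (hPle1 _))
    have h3 : (1:ℝ) < δ * ((K:ℝ) * ε) := by
      rw [div_lt_iff₀ (by positivity)] at hK
      calc (1:ℝ) < (K:ℝ) * (δ * ε) := hK
        _ = δ * ((K:ℝ) * ε) := by ring
    linarith
  obtain ⟨i, hBi⟩ := hex
  calc ρ ^ 𝒮.card ≤ scg 𝒮 v ρ X₁ := hgX1
    _ ≤ ∑ Y, stopStepN G (scA 𝒮) (i * 𝒮.card) X₁ Y * scg 𝒮 v ρ Y := hM _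
    _ ≤ scP 𝒮 G X₁ (i * 𝒮.card) + scB 𝒮 v G X₁ (i * 𝒮.card) := hPB _
    _ ≤ reachProb G (scA 𝒮) X₁ + ε := add_le_add (hreach _) hBi.le
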